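/- Suppose $f : \mathbb{R}^n \to \mathbb{R}$ has $L$-Lipschitz gradient. Let $x \in \mathrm{dom}\, r$, let $\Lambda$ be symmetric positive definite with $\Lambda \succeq \lambda_m I$, let $g \in \mathbb{R}^n$ (a stochastic gradient estimate), and set $v := \mathrm{prox}^\Lambda_r(x - \Lambda^{-1} g) - x$. Let $\gamma \in (0,1)$, $\rho \in (1,\gamma^{-1})$, and $\bar\alpha := 2(1-\gamma\rho)\lambda_m / L$. Then for all $\alpha \in [0, \min\{1,\bar\alpha\}]$, $\psi(x + \alpha v) - \psi(x) \le -\alpha\gamma\|v\|_\Lambda^2 + \frac{\alpha}{4\gamma(\rho-1)\lambda_m}\|\nabla f(x) - g\|^2$, where $\psi = f + r$. -/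

import Mathlib

open scoped RealInnerProductSpace

lemma descent_lemma {n : ℕ} (f : EuclideanSpace ℝ (Fin n) → ℝ)
    (gradf : EuclideanSpace ℝ (Fin n) → EuclideanSpace ℝ (Fin n))
    (hgrad : ∀ x, HasGradientAt f (gradf x) x)
    (L : ℝ)
    (hlip : ∀ x y, ‖gradf x - gradf y‖ ≤ L * ‖x - y‖)
    (x v : EuclideanSpace ℝ (Fin n)) :
    f (x + v) ≤ f x + ⟪gradf x, v⟫ + L / 2 * ‖v‖ ^ 2 := by
  set h : ℝ → ℝ := fun t => f (x + t • v) - t * ⟪gradf x, v⟫ - L / 2 * t ^ 2 * ‖v‖ ^ 2 with hh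
  have hderiv : ∀ t : ℝ, HasDerivAt h
      (⟪gradf (x + t • v), v⟫ - ⟪gradf x, v⟫ - L * t * ‖v‖ ^ 2) t := by
    intro t
    have hline : HasDerivAt (fun t : ℝ => x + t • v) v t := by
      simpa using ((hasDerivAt_id t).smul_const v).const_add x
    have hf : HasFDerivAt f (InnerProductSpace.toDual ℝ _ (gradf (x + t • v))) (x + t • v) :=
      (hasGradientAt_iff_hasFDerivAt.mp (hgrad (x + t • v)))
    have hcomp : HasDerivAt (fun t : ℝ => f (x + t • v)) ⟪gradf (x + t • v), v⟫ t := by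
      have := hf.comp_hasDerivAt t hline
      simpa [InnerProductSpace.toDual_apply_apply, Function.comp_def] using this
    have h2 : HasDerivAt (fun t : ℝ => t * ⟪gradf x, v⟫) ⟪gradf x, v⟫ t := by
      simpa using (hasDerivAt_id t).mul_const ⟪gradf x, v⟫
    have h3 : HasDerivAt (fun t : ℝ => L / 2 * t ^ 2 * ‖v‖ ^ 2) (L * t * ‖v‖ ^ 2) t := by
      have h4 : HasDerivAt (fun t : ℝ => t ^ 2) (2 * t) t := by
        simpa using hasDerivAt_pow 2 t
      have := (h4.const_mul (L / 2)).mul_const (‖v‖ ^ 2)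
      rw [show L * t * ‖v‖ ^ 2 = L / 2 * (2 * t) * ‖v‖ ^ 2 by ring]
      exact this
    exact (hcomp.sub h2).sub h3
  have hdiff : Differentiable ℝ h := fun t => (hderiv t).differentiableAt
  have hanti : AntitoneOn h (Set.Icc 0 1) := by
    apply antitoneOn_of_deriv_nonpos (convex_Icc 0 1) hdiff.continuous.continuousOn
      (hdiff.differentiableOn)
    intro t ht
    rw [interior_Icc] at ht
    rw [(hderiv t).deriv]
    have hb : ⟪gradf (x + t • v) - gradf x, v⟫ ≤ L * t * ‖v‖ ^ 2 := by
      calc ⟪gradf (x + t • v) - gradf x, v⟫ ≤ ‖gradf (x + t • v) - gradf x‖ * ‖v‖ :=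
            real_inner_le_norm _ _
        _ ≤ (L * ‖(x + t • v) - x‖) * ‖v‖ := by
            have := hlip (x + t • v) x
            nlinarith [norm_nonneg v]
        _ = L * t * ‖v‖ ^ 2 := by
            rw [add_sub_cancel_left, norm_smul]
            simp [abs_of_pos ht.1]
            ring
    rw [inner_sub_left] at hb
    linarith
  have := hanti (Set.mem_Icc.mpr ⟨le_refl 0, zero_le_one⟩)
    (Set.mem_Icc.mpr ⟨zero_le_one, le_refl 1⟩) zero_le_one
  simp only [hh, one_smul, zero_smul, add_zero, one_pow, one_mul, zero_mul, zero_pow] at this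
  nlinarith [this]


lemma real_limit (rp rx S Q : ℝ) (hQ0 : 0 ≤ Q)
    (key : ∀ t : ℝ, 0 ≤ t → t < 1 → rp - rx ≤ -S - (1 + t) / 2 * Q) :
    rp - rx ≤ -S - Q := by
  rcases eq_or_lt_of_le hQ0 with hQz | hQpos
  · have := key 0 le_rfl one_pos
    rw [← hQz] at this ⊢
    simpa using this
  · apply le_of_forall_pos_le_add
    intro ε hε
    have htQ : 0 < 2 * ε / Q := by positivity
    have hm0 : 0 < min 1 (2 * ε / Q) := lt_min one_pos htQ
    have hm1 : min 1 (2 * ε / Q) ≤ 1 := min_le_left _ _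
    have hmQ : min 1 (2 * ε / Q) * Q ≤ 2 * ε := by
      have h5 : min 1 (2 * ε / Q) ≤ 2 * ε / Q := min_le_right _ _
      rw [le_div_iff₀ hQpos] at h5
      exact h5
    have hk := key (1 - min 1 (2 * ε / Q)) (by linarith) (by linarith)
    nlinarith [hk, hmQ]

lemma real_key (rp rx S Q W t : ℝ) (ht1 : t < 1)
    (h4 : rp + 1/2 * (W + 2 * S + Q) ≤ t * rp + (1 - t) * rx + 1/2 * (W + 2 * t * S + t ^ 2 * Q)) :
    rp - rx ≤ -S - (1 + t) / 2 * Q := by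
  have h1t : (0:ℝ) < 1 - t := by linarith
  have hA : (1 - t) * (rp - rx) ≤ (1 - t) * (-S - (1 + t) / 2 * Q) := by nlinarith [h4]
  exact le_of_mul_le_mul_left (by linarith [hA]) h1t

lemma real_final (γ ρ α L lm fy fx rp rx S Q G nd nv : ℝ)
    (hγ0 : 0 < γ) (hρ1 : 1 < ρ) (hγρ : 0 < 1 - γ * ρ)
    (hlm : 0 < lm) (hα0 : 0 ≤ α) (hαL : L * α ≤ 2 * (1 - γ * ρ) * lm)
    (hnd : 0 ≤ nd) (hnv : 0 ≤ nv)
    (hdesc : fy ≤ fx + α * G + L / 2 * (α * nv) ^ 2)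
    (hVI : rp - rx ≤ -S - Q)
    (hQv : lm * nv ^ 2 ≤ Q)
    (hinner : G - S ≤ nd * nv) :
    fy + (α * rp + (1 - α) * rx) ≤ fx + rx + (-(α * γ) * Q + α / (4 * γ * (ρ - 1) * lm) * nd ^ 2) := by
  have hρ1' : 0 < ρ - 1 := by linarith
  have hc : 0 < γ * (ρ - 1) * lm := by positivity
  have hQ0 : 0 ≤ Q := le_trans (by positivity) hQv
  have hyoung : G - S ≤ nd ^ 2 / (4 * (γ * (ρ - 1) * lm)) + (γ * (ρ - 1) * lm) * nv ^ 2 := by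
    have h9 : nd * nv - (γ * (ρ - 1) * lm) * nv ^ 2 ≤ nd ^ 2 / (4 * (γ * (ρ - 1) * lm)) := by
      rw [le_div_iff₀ (by positivity : (0:ℝ) < 4 * (γ * (ρ - 1) * lm))]
      nlinarith [sq_nonneg (nd - 2 * (γ * (ρ - 1) * lm) * nv)]
    linarith
  have hαP : α * (G - S) ≤ α * (nd ^ 2 / (4 * (γ * (ρ - 1) * lm)))
      + α * ((γ * (ρ - 1) * lm) * nv ^ 2) := by
    have h := mul_le_mul_of_nonneg_left hyoung hα0
    linarith [h]
  have hcN : α * ((γ * (ρ - 1) * lm) * nv ^ 2) ≤ α * (γ * (ρ - 1) * Q) := by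
    apply mul_le_mul_of_nonneg_left _ hα0
    have h := mul_le_mul_of_nonneg_left hQv (le_of_lt (by positivity : (0:ℝ) < γ * (ρ - 1)))
    linarith [h]
  have hLterm : L / 2 * (α * nv) ^ 2 ≤ α * ((1 - γ * ρ) * Q) := by
    have h10 : L / 2 * (α * nv) ^ 2 = (L * α / 2) * (α * nv ^ 2) := by ring
    rw [h10]
    have h11 : (L * α / 2) * (α * nv ^ 2) ≤ ((1 - γ * ρ) * lm) * (α * nv ^ 2) := by
      apply mul_le_mul_of_nonneg_right _ (by positivity)
      linarith
    have h12 : (1 - γ * ρ) * (α * (lm * nv ^ 2)) ≤ (1 - γ * ρ) * (α * Q) :=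
      mul_le_mul_of_nonneg_left (mul_le_mul_of_nonneg_left hQv hα0) hγρ.le
    linarith [h11, h12]
  have hαVI : α * rp ≤ α * (rx - S - Q) := by
    apply mul_le_mul_of_nonneg_left _ hα0
    linarith
  have hCeq : α * (nd ^ 2 / (4 * (γ * (ρ - 1) * lm))) = α / (4 * γ * (ρ - 1) * lm) * nd ^ 2 := by
    ring
  rw [← hCeq]
  linarith [hdesc, hαP, hcN, hLterm, hαVI]

theorem stmt8 (n : ℕ) (f : EuclideanSpace ℝ (Fin n) → ℝ)
    (gradf : EuclideanSpace ℝ (Fin n) → EuclideanSpace ℝ (Fin n))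
    (hgrad : ∀ x, HasGradientAt f (gradf x) x)
    (L : ℝ) (hL : 0 < L)
    (hlip : ∀ x y, ‖gradf x - gradf y‖ ≤ L * ‖x - y‖)
    (r : EuclideanSpace ℝ (Fin n) → EReal)
    (hconv : ∀ x y : EuclideanSpace ℝ (Fin n), ∀ t : ℝ, 0 ≤ t → t ≤ 1 →
      r (t • x + (1 - t) • y) ≤ (t : EReal) * r x + ((1 - t : ℝ) : EReal) * r y)
    (hlsc : LowerSemicontinuous r)
    (hproper₁ : ∃ x, r x ≠ ⊤) (hproper₂ : ∀ x, r x ≠ ⊥)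
    (Λ Λinv : EuclideanSpace ℝ (Fin n) →L[ℝ] EuclideanSpace ℝ (Fin n))
    (hsymm : ∀ u v, ⟪Λ u, v⟫ = ⟪u, Λ v⟫)
    (hΛinv : ∀ u, Λ (Λinv u) = u ∧ Λinv (Λ u) = u)
    (lm : ℝ) (hlm : 0 < lm)
    (hlow : ∀ u, lm * ‖u‖ ^ 2 ≤ ⟪u, Λ u⟫)
    (prox : EuclideanSpace ℝ (Fin n) → EuclideanSpace ℝ (Fin n))
    (hprox : ∀ x y, r (prox x) + (((1 : ℝ) / 2 * ⟪x - prox x, Λ (x - prox x)⟫ : ℝ) : EReal)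
        ≤ r y + (((1 : ℝ) / 2 * ⟪x - y, Λ (x - y)⟫ : ℝ) : EReal))
    (x : EuclideanSpace ℝ (Fin n)) (hx : r x ≠ ⊤)
    (g : EuclideanSpace ℝ (Fin n))
    (γ ρ α : ℝ) (hγ0 : 0 < γ) (hγ1 : γ < 1) (hρ1 : 1 < ρ) (hρ2 : ρ < γ⁻¹)
    (hα0 : 0 ≤ α) (hα1 : α ≤ min 1 (2 * (1 - γ * ρ) * lm / L)) :
    (f (x + α • (prox (x - Λinv g) - x)) : EReal) + r (x + α • (prox (x - Λinv g) - x))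
      ≤ (f x : EReal) + r x
        + ((-(α * γ) * ⟪prox (x - Λinv g) - x, Λ (prox (x - Λinv g) - x)⟫
            + α / (4 * γ * (ρ - 1) * lm) * ‖gradf x - g‖ ^ 2 : ℝ) : EReal) := by
  set w : EuclideanSpace ℝ (Fin n) := Λinv g with hwdef
  set p : EuclideanSpace ℝ (Fin n) := prox (x - w) with hpdef
  set v : EuclideanSpace ℝ (Fin n) := p - x with hvdef
  have hΛw : Λ w = g := (hΛinv g).1
  set Q : ℝ := ⟪v, Λ v⟫ with hQdef
  set S : ℝ := ⟪g, v⟫ with hSdef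
  set W : ℝ := ⟪w, Λ w⟫ with hWdef
  have hSw : ⟪w, Λ v⟫ = S := by rw [← hsymm, hΛw]
  have hSw' : ⟪v, Λ w⟫ = S := by rw [real_inner_comm, hsymm, ← hSw, real_inner_comm]
  -- quadratic expansions
  have hexp : ∀ a : ℝ, ⟪(x - w) - (x + a • v), Λ ((x - w) - (x + a • v))⟫
      = W + 2 * a * S + a ^ 2 * Q := by
    intro a
    have h1 : (x - w) - (x + a • v) = -(w + a • v) := by module
    rw [h1, map_neg, inner_neg_neg]
    simp only [map_add, map_smul, inner_add_left, inner_add_right,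
      real_inner_smul_left, real_inner_smul_right]
    rw [hSw, hSw', ← hQdef, ← hWdef]
    ring
  have hp1 : x + (1 : ℝ) • v = p := by rw [one_smul, hvdef]; abel
  -- finiteness of r x, r p
  have hrxbot := hproper₂ x
  set rx : ℝ := (r x).toReal with hrxdef
  have hrx : (rx : EReal) = r x := EReal.coe_toReal hx hrxbot
  have hproxc := hprox (x - w) x
  rw [← hpdef] at hproxc
  have hrp_ne_top : r p ≠ ⊤ := by
    intro htop
    rw [htop, ← hrx] at hproxc
    rw [EReal.top_add_coe] at hproxc
    have : ((rx : EReal) + (((1:ℝ)/2 * ⟪x - w - x, Λ (x - w - x)⟫ : ℝ) : EReal)) ≠ ⊤ := by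
      rw [← EReal.coe_add]
      exact EReal.coe_ne_top _
    exact this (top_le_iff.mp hproxc)
  set rp : ℝ := (r p).toReal with hrpdef
  have hrp : (rp : EReal) = r p := EReal.coe_toReal hrp_ne_top (hproper₂ p)
  -- line identity
  have hxt : ∀ a : ℝ, a • p + (1 - a) • x = x + a • v := by
    intro a; rw [hvdef]; module
  -- key inequality for t ∈ [0,1)
  have key : ∀ t : ℝ, 0 ≤ t → t < 1 → rp - rx ≤ -S - (1 + t) / 2 * Q := by
    intro t ht0 ht1
    have h1 := hprox (x - w) (x + t • v)
    rw [← hpdef, ← hrp] at h1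
    have h2 := hconv p x t ht0 ht1.le
    rw [hxt t, ← hrp, ← hrx] at h2
    have h3 : (rp : EReal) + (((1:ℝ)/2 * ⟪(x - w) - p, Λ ((x - w) - p)⟫ : ℝ) : EReal)
        ≤ ((t * rp + (1 - t) * rx : ℝ) : EReal)
          + (((1:ℝ)/2 * ⟪(x - w) - (x + t • v), Λ ((x - w) - (x + t • v))⟫ : ℝ) : EReal) := by
      refine le_trans h1 (add_le_add_left (le_trans h2 ?_) _)
      rw [← EReal.coe_mul, ← EReal.coe_mul, ← EReal.coe_add]
    have h4 : rp + (1:ℝ)/2 * ⟪(x - w) - p, Λ ((x - w) - p)⟫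
        ≤ t * rp + (1 - t) * rx
          + (1:ℝ)/2 * ⟪(x - w) - (x + t • v), Λ ((x - w) - (x + t • v))⟫ := by
      exact_mod_cast h3
    have e1 : ⟪(x - w) - p, Λ ((x - w) - p)⟫ = W + 2 * S + Q := by
      rw [← hp1]
      have := hexp 1
      simpa using this
    rw [e1, hexp t] at h4
    exact real_key rp rx S Q W t ht1 (by linarith [h4])
  -- nonnegativity of Q
  have hQv : lm * ‖v‖ ^ 2 ≤ Q := hlow v
  have hQ0 : 0 ≤ Q := le_trans (by positivity) hQv
  have hVI : rp - rx ≤ -S - Q := real_limit rp rx S Q hQ0 key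
  -- parameter bounds
  have hα1' : α ≤ 1 := le_trans hα1 (min_le_left _ _)
  have hγρ : 0 < 1 - γ * ρ := by
    have : γ * ρ < γ * γ⁻¹ := mul_lt_mul_of_pos_left hρ2 hγ0
    rw [mul_inv_cancel₀ (ne_of_gt hγ0)] at this
    linarith
  have hαL : L * α ≤ 2 * (1 - γ * ρ) * lm := by
    have h7 : α ≤ 2 * (1 - γ * ρ) * lm / L := le_trans hα1 (min_le_right _ _)
    rw [le_div_iff₀ hL] at h7
    linarith
  -- convexity bound on r (x + α v)
  have hconvα := hconv p x α hα0 hα1'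
  rw [hxt α, ← hrp, ← hrx] at hconvα
  have hry : r (x + α • v) ≤ ((α * rp + (1 - α) * rx : ℝ) : EReal) := by
    refine le_trans hconvα ?_
    rw [← EReal.coe_mul, ← EReal.coe_mul, ← EReal.coe_add]
  -- descent lemma
  have hdesc := descent_lemma f gradf hgrad L hlip x (α • v)
  rw [real_inner_smul_right, norm_smul] at hdesc
  rw [Real.norm_eq_abs, abs_of_nonneg hα0] at hdesc
  have hdesc' : f (x + α • v) ≤ f x + α * ⟪gradf x, v⟫ + L / 2 * (α * ‖v‖) ^ 2 := by
    nlinarith [hdesc]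
  set d : EuclideanSpace ℝ (Fin n) := gradf x - g with hddef
  have hinner : ⟪gradf x, v⟫ - S ≤ ‖d‖ * ‖v‖ := by
    have h8 : ⟪d, v⟫ = ⟪gradf x, v⟫ - S := by rw [hddef, inner_sub_left, hSdef]
    rw [← h8]
    exact real_inner_le_norm _ _
  -- reduce goal to reals
  rw [← hrx]
  refine le_trans (add_le_add_right hry _) ?_
  rw [← EReal.coe_add, ← EReal.coe_add, ← EReal.coe_add, EReal.coe_le_coe_iff]
  exact real_final γ ρ α L lm (f (x + α • v)) (f x) rp rx S Q ⟪gradf x, v⟫ ‖d‖ ‖v‖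
    hγ0 hρ1 hγρ hlm hα0 hαL (norm_nonneg d) (norm_nonneg v) hdesc' hVI hQv hinner
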